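/- (Feinberg decomposition equality) Suppose a chemical kinetic system with species formation rate function f = N·K (N the m×r stoichiometric matrix, K(x) ∈ ℝ^r_{>0} for x ∈ ℝ^m_{>0}) is decomposed into subnetworks whose stoichiometric column blocks N_1,…,N_α satisfy rank N = Σ rank N_i (independence). Then the positive steady state set of the whole system equals the intersection of the positive steady state sets of the subsystems: E_+(N,K) = ⋂_i E_+(N_i,K_i). -/

import Mathlib

open Matrix

/-- Feinberg decomposition equality. For a kinetic system
`f(x) = N *ᵥ K x` with strictly positive rates on positive states, decomposed
via a partition `p` of the reactions into column blocks whose ranks add up to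
the rank of `N` (independence), the positive steady state set of the whole
system equals the intersection of the positive steady state sets of the
subsystems. -/
theorem stmt4 (m r α : ℕ) (N : Matrix (Fin m) (Fin r) ℝ)
    (K : (Fin m → ℝ) → Fin r → ℝ)
    (hK : ∀ x, (∀ s, 0 < x s) → ∀ j, 0 < K x j)
    (p : Fin r → Fin α)
    (hind : N.rank = ∑ a,
      Module.finrank ℝ (Submodule.span ℝ ((fun j i => N i j) '' {j | p j = a}))) :
    ∀ x : Fin m → ℝ, (∀ s, 0 < x s) →
      (N *ᵥ K x = 0 ↔ ∀ a, N *ᵥ (fun j => if p j = a then K x j else 0) = 0) := by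
  intro x hx
  set g : Fin r → Fin m → ℝ := fun j i => N i j with hg
  set V : Fin α → Submodule ℝ (Fin m → ℝ) :=
    fun a => Submodule.span ℝ (g '' {j | p j = a}) with hV
  -- the summation map from the product of the block column spaces
  let φ : (∀ a, V a) →ₗ[ℝ] (Fin m → ℝ) :=
    { toFun := fun v => ∑ a, (v a : Fin m → ℝ)
      map_add' := by
        intro u v
        simp [Finset.sum_add_distrib]
      map_smul' := by
        intro c v
        simp [Finset.smul_sum] }
  -- the whole column space
  have hcols : Set.range Nᵀ = Set.range g := rfl
  -- range of φ equals the span of all columns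
  have hrange : LinearMap.range φ = Submodule.span ℝ (Set.range g) := by
    apply le_antisymm
    · rintro _ ⟨v, rfl⟩
      show (∑ a, (v a : Fin m → ℝ)) ∈ Submodule.span ℝ (Set.range g)
      refine Submodule.sum_mem _ fun a _ => ?_
      have : (V a : Set (Fin m → ℝ)) ⊆ Submodule.span ℝ (Set.range g) := by
        rw [hV]
        refine Submodule.span_le.mpr ?_
        exact (Set.image_subset_range _ _).trans Submodule.subset_span
      exact this (v a).2
    · rw [Submodule.span_le]
      rintro _ ⟨j, rfl⟩
      have hmem : g j ∈ V (p j) := Submodule.subset_span ⟨j, rfl, rfl⟩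
      refine ⟨Pi.single (p j) ⟨g j, hmem⟩, ?_⟩
      have heq : φ (Pi.single (p j) (⟨g j, hmem⟩ : V (p j)))
          = ∑ a, (((Pi.single (p j) (⟨g j, hmem⟩ : V (p j)) : ∀ a, V a) a : V a) : Fin m → ℝ) := rfl
      rw [heq, Finset.sum_eq_single (p j)]
      · simp
      · intro b _ hb
        rw [Pi.single_eq_of_ne hb]; rfl
      · simp
  -- finrank of the domain of φ
  have hdom : Module.finrank ℝ (∀ a, V a) = ∑ a, Module.finrank ℝ (V a) :=
    Module.finrank_pi_fintype ℝ
  -- finrank of the range of φ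
  have hrk : Module.finrank ℝ (LinearMap.range φ) = N.rank := by
    rw [hrange, N.rank_eq_finrank_span_cols]; rfl
  -- φ is injective
  have hinj : Function.Injective φ := by
    have h1 : Module.finrank ℝ (LinearMap.range φ) + Module.finrank ℝ (LinearMap.ker φ)
        = Module.finrank ℝ (∀ a, V a) := LinearMap.finrank_range_add_finrank_ker φ
    have hind' : N.rank = ∑ a, Module.finrank ℝ (V a) := hind
    rw [hrk, hind', ← hdom] at h1
    have hker : Module.finrank ℝ (LinearMap.ker φ) = 0 := by omega
    rw [← LinearMap.ker_eq_bot]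
    exact Submodule.finrank_eq_zero.mp hker
  -- the block vectors
  set w : Fin α → Fin m → ℝ :=
    fun a => N *ᵥ (fun j => if p j = a then K x j else 0) with hw
  have hwmem : ∀ a, w a ∈ V a := by
    intro a
    have : w a = ∑ j ∈ Finset.univ.filter (fun j => p j = a), K x j • g j := by
      funext i
      simp only [hw, mulVec, dotProduct, Finset.sum_apply, Pi.smul_apply, smul_eq_mul,
        mul_ite, mul_zero]
      rw [Finset.sum_filter]
      congr 1; funext j
      split <;> [ring; rfl]
    rw [this]
    refine Submodule.sum_mem _ fun j hj => ?_
    exact Submodule.smul_mem _ _ (Submodule.subset_span ⟨j, (Finset.mem_filter.mp hj).2, rfl⟩)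
  have hsum : ∑ a, w a = N *ᵥ K x := by
    funext i
    simp only [hw, mulVec, dotProduct, Finset.sum_apply, mul_ite, mul_zero]
    rw [Finset.sum_comm]
    congr 1; funext j
    simp
  constructor
  · intro h0 a
    set v : ∀ a, V a := fun a => ⟨w a, hwmem a⟩ with hv
    have : φ v = φ 0 := by
      show (∑ a, (v a : Fin m → ℝ)) = _
      simp only [hv, hsum, h0]
      simp [φ]
    have := hinj this
    have : w a = 0 := by
      have := congrFun this a
      simpa [hv] using congrArg Subtype.val this
    exact this
  · intro h
    rw [← hsum]
    funext i
    rw [Finset.sum_apply]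
    exact Finset.sum_eq_zero fun c _ => congrFun (h c) i
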